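/- Let f : ℝⁿ → ℝ be convex and differentiable with L_f-Lipschitz continuous gradient (L_f > 0), let g : ℝⁿ → (−∞, +∞] be proper, lower semicontinuous and convex, and let λ ∈ (0, 2/L_f). Then the prox-grad mapping T_λ defined by T_λ(x) = prox_{λg}(x − λ∇f(x)) is (2 + λL_f)/4-averaged; that is, there exists a nonexpansive operator T : ℝⁿ → ℝⁿ such that T_λ = ((2 − λL_f)/4)·I + ((2 + λL_f)/4)·T, where I is the identity. -/

import Mathlib

open RealInnerProductSpace
set_option linter.unusedSectionVars false

variable {E : Type*} [NormedAddCommGroup E] [InnerProductSpace ℝ E] [CompleteSpace E]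

lemma hasGradientAt_of_hasFDerivAt' {f : E → ℝ} {D : E →L[ℝ] ℝ} {v : E} {x : E}
    (h : HasFDerivAt f D x) (hv : ∀ z, D z = ⟪v, z⟫) : HasGradientAt f v x := by
  rw [hasGradientAt_iff_hasFDerivAt]
  have hD : InnerProductSpace.toDual ℝ E v = D := by
    ext z
    simp [InnerProductSpace.toDual_apply_apply, hv]
  rw [hD]
  exact h

lemma curve_hasDerivAt (x y : E) (t : ℝ) :
    HasDerivAt (fun s : ℝ => x + s • (y - x)) (y - x) t := by
  simpa using ((hasDerivAt_id t).smul_const (y - x)).const_add x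

lemma comp_curve_hasDerivAt {f : E → ℝ} {f' : E → E}
    (hdiff : ∀ x, HasGradientAt f (f' x) x) (x y : E) (t : ℝ) :
    HasDerivAt (fun s : ℝ => f (x + s • (y - x))) ⟪f' (x + t • (y - x)), y - x⟫ t := by
  have hF : HasFDerivAt f (InnerProductSpace.toDual ℝ E (f' (x + t • (y - x)))) (x + t • (y - x)) :=
    hasGradientAt_iff_hasFDerivAt.mp (hdiff _)
  have := hF.comp_hasDerivAt t (curve_hasDerivAt x y t)
  simp only [InnerProductSpace.toDual_apply_apply] at this
  exact this

/-- first-order condition for convexity -/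
lemma first_order {f : E → ℝ} {f' : E → E}
    (hconv : ConvexOn ℝ Set.univ f) (hdiff : ∀ x, HasGradientAt f (f' x) x)
    (x y : E) : f x + ⟪f' x, y - x⟫ ≤ f y := by
  have hφ : HasDerivAt (fun s : ℝ => f (x + s • (y - x))) ⟪f' x, y - x⟫ 0 := by
    simpa using comp_curve_hasDerivAt hdiff x y 0
  have hslope : Filter.Tendsto (fun t : ℝ => (f (x + t • (y - x)) - f x) / t)
      (nhdsWithin 0 (Set.Ioi 0)) (nhds ⟪f' x, y - x⟫) := by
    have h2 := (hφ.hasDerivWithinAt (s := Set.Ioi (0:ℝ)))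
    rw [hasDerivWithinAt_iff_tendsto_slope] at h2
    have hset : Set.Ioi (0:ℝ) \ {0} = Set.Ioi 0 := by
      ext t; simp only [Set.mem_diff, Set.mem_Ioi, Set.mem_singleton_iff]
      exact ⟨fun h => h.1, fun h => ⟨h, ne_of_gt h⟩⟩
    rw [hset] at h2
    refine h2.congr (fun t => ?_)
    simp [slope_def_field, div_eq_inv_mul]
  have hbound : ∀ᶠ t in nhdsWithin (0:ℝ) (Set.Ioi 0),
      (f (x + t • (y - x)) - f x) / t ≤ f y - f x := by
    filter_upwards [Ioc_mem_nhdsGT_of_mem (Set.mem_Ico.mpr ⟨le_refl 0, zero_lt_one⟩)] with t ht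
    obtain ⟨ht0, ht1⟩ := ht
    have hcx : x + t • (y - x) = (1 - t) • x + t • y := by
      module
    have := hconv.2 (Set.mem_univ x) (Set.mem_univ y) (by linarith : (0:ℝ) ≤ 1 - t)
      (le_of_lt ht0) (by ring)
    rw [← hcx] at this
    rw [div_le_iff₀ ht0]
    simp only [smul_eq_mul] at this
    nlinarith
  have := le_of_tendsto hslope hbound
  linarith

/-- monotone gradient implies convex -/
lemma convexOn_of_monotone_grad {h : E → ℝ} {h' : E → E}
    (hdiff : ∀ x, HasGradientAt h (h' x) x)
    (hmono : ∀ x y, 0 ≤ ⟪h' x - h' y, x - y⟫) :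
    ConvexOn ℝ Set.univ h := by
  refine ⟨convex_univ, fun x _ y _ a b ha hb hab => ?_⟩
  set φ := fun s : ℝ => h (x + s • (y - x)) with hφdef
  have hφd : ∀ t : ℝ, HasDerivAt φ ⟪h' (x + t • (y - x)), y - x⟫ t :=
    fun t => comp_curve_hasDerivAt hdiff x y t
  have hderiv : ∀ t : ℝ, deriv φ t = ⟪h' (x + t • (y - x)), y - x⟫ :=
    fun t => (hφd t).deriv
  have hmonoφ : Monotone (deriv φ) := by
    intro s t hst
    rcases eq_or_lt_of_le hst with rfl | hlt
    · exact le_rfl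
    · rw [hderiv, hderiv]
      have key := hmono (x + t • (y - x)) (x + s • (y - x))
      have hdiffpt : (x + t • (y - x)) - (x + s • (y - x)) = (t - s) • (y - x) := by module
      rw [hdiffpt, real_inner_smul_right] at key
      have h2 : 0 ≤ ⟪h' (x + t • (y - x)) - h' (x + s • (y - x)), y - x⟫ := by
        by_contra hc
        push_neg at hc
        nlinarith
      rw [inner_sub_left] at h2
      linarith
  have hconvφ : ConvexOn ℝ Set.univ φ :=
    Monotone.convexOn_univ_of_deriv (fun t => (hφd t).differentiableAt) hmonoφ
  have key := hconvφ.2 (Set.mem_univ (0:ℝ)) (Set.mem_univ (1:ℝ)) ha hb hab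
  simp only [smul_eq_mul, mul_zero, mul_one, zero_add] at key
  have h0 : φ 0 = h x := by simp [hφdef]
  have h1 : φ 1 = h y := by simp [hφdef]
  have hb' : φ b = h (a • x + b • y) := by
    have : x + b • (y - x) = a • x + b • y := by
      have : a = 1 - b := by linarith
      rw [this]; module
    rw [hφdef]; simp only; rw [this]
  rw [h0, h1, hb'] at key
  simpa [smul_eq_mul] using key

lemma grad_gq (L : ℝ) {f : E → ℝ} {f' : E → E}
    (hdiff : ∀ x, HasGradientAt f (f' x) x) (x : E) :
    HasGradientAt (fun z => L / 2 * ‖z‖ ^ 2 - f z) (L • x - f' x) x := by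
  have h1 : HasFDerivAt (fun z : E => L / 2 * ‖z‖ ^ 2) ((L / 2) • (2 • innerSL ℝ x)) x :=
    ((hasStrictFDerivAt_norm_sq x).hasFDerivAt).const_mul (L / 2)
  have h2 := hasGradientAt_iff_hasFDerivAt.mp (hdiff x)
  apply hasGradientAt_of_hasFDerivAt' (h1.sub h2)
  intro z
  simp [InnerProductSpace.toDual_apply_apply, inner_sub_left, real_inner_smul_left]
  ring

lemma grad_linear_sub {f : E → ℝ} {f' : E → E} (c : E)
    (hdiff : ∀ x, HasGradientAt f (f' x) x) (z : E) :
    HasGradientAt (fun z => f z - ⟪c, z⟫) (f' z - c) z := by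
  have h2 : HasFDerivAt (fun z : E => ⟪c, z⟫) (innerSL ℝ c) z := (innerSL ℝ c).hasFDerivAt
  have h1 := hasGradientAt_iff_hasFDerivAt.mp (hdiff z)
  apply hasGradientAt_of_hasFDerivAt' (h1.sub h2)
  intro w
  simp [InnerProductSpace.toDual_apply_apply, inner_sub_left]
lemma descent {f : E → ℝ} {f' : E → E} {L : ℝ} (hL : 0 < L)
    (hdiff : ∀ x, HasGradientAt f (f' x) x)
    (hlip : ∀ x y, ‖f' x - f' y‖ ≤ L * ‖x - y‖)
    (x y : E) : f y ≤ f x + ⟪f' x, y - x⟫ + L / 2 * ‖y - x‖ ^ 2 := by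
  have hq : ∀ z : E, HasGradientAt (fun z => L / 2 * ‖z‖ ^ 2 - f z) (L • z - f' z) z :=
    grad_gq L hdiff
  have hqconv : ConvexOn ℝ Set.univ (fun z : E => L / 2 * ‖z‖ ^ 2 - f z) := by
    apply convexOn_of_monotone_grad hq
    intro u v
    have h1 : ⟪(L • u - f' u) - (L • v - f' v), u - v⟫
        = L * ‖u - v‖ ^ 2 - ⟪f' u - f' v, u - v⟫ := by
      have : (L • u - f' u) - (L • v - f' v) = L • (u - v) - (f' u - f' v) := by module
      rw [this, inner_sub_left, real_inner_smul_left, real_inner_self_eq_norm_sq]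
    have h2 : ⟪f' u - f' v, u - v⟫ ≤ ‖f' u - f' v‖ * ‖u - v‖ := real_inner_le_norm _ _
    have h3 : ‖f' u - f' v‖ * ‖u - v‖ ≤ L * ‖u - v‖ * ‖u - v‖ :=
      mul_le_mul_of_nonneg_right (hlip u v) (norm_nonneg _)
    rw [h1]
    nlinarith [sq_nonneg ‖u - v‖]
  have hfo := first_order hqconv hq x y
  have hin : ⟪L • x - f' x, y - x⟫ = L * ⟪x, y - x⟫ - ⟪f' x, y - x⟫ := by
    rw [inner_sub_left, real_inner_smul_left]
  have hns : ‖y - x‖ ^ 2 = ‖y‖ ^ 2 - 2 * ⟪y, x⟫ + ‖x‖ ^ 2 := by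
    rw [← real_inner_self_eq_norm_sq, ← real_inner_self_eq_norm_sq, ← real_inner_self_eq_norm_sq]
    rw [inner_sub_left, inner_sub_right, inner_sub_right, real_inner_comm y x]
    ring
  have hxyx : ⟪x, y - x⟫ = ⟪y, x⟫ - ‖x‖ ^ 2 := by
    rw [inner_sub_right, ← real_inner_self_eq_norm_sq, real_inner_comm]
  rw [hin, hxyx] at hfo
  nlinarith [hfo]

lemma baillon_haddad {f : E → ℝ} {f' : E → E} {L : ℝ} (hL : 0 < L)
    (hconv : ConvexOn ℝ Set.univ f)
    (hdiff : ∀ x, HasGradientAt f (f' x) x)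
    (hlip : ∀ x y, ‖f' x - f' y‖ ≤ L * ‖x - y‖)
    (x y : E) : 1 / L * ‖f' x - f' y‖ ^ 2 ≤ ⟪f' x - f' y, x - y⟫ := by
  have key : ∀ x y : E, 1 / (2 * L) * ‖f' y - f' x‖ ^ 2 ≤ f y - f x - ⟪f' x, y - x⟫ := by
    intro x y
    set c := f' x with hc
    set h := fun z : E => f z - ⟪c, z⟫ with hh
    have hh' : ∀ z, HasGradientAt h (f' z - c) z := grad_linear_sub c hdiff
    have hhconv : ConvexOn ℝ Set.univ h := by
      refine ⟨convex_univ, fun u _ v _ a b ha hb hab => ?_⟩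
      have hf := hconv.2 (Set.mem_univ u) (Set.mem_univ v) ha hb hab
      simp only [hh, smul_eq_mul, inner_add_right, real_inner_smul_right] at *
      linarith
    set w := y - (1 / L) • (f' y - c) with hw
    -- h x ≤ h w
    have h1 : h x ≤ h w := by
      have := first_order hhconv hh' x w
      simp only [hc, sub_self, inner_zero_left] at this
      linarith
    -- descent for h : h w ≤ h y - 1/(2L) ‖f' y - c‖²
    have h2 : h w ≤ h y - 1 / (2 * L) * ‖f' y - c‖ ^ 2 := by
      have hd := descent hL hdiff hlip y w
      have hwy : w - y = -((1 / L) • (f' y - c)) := by rw [hw]; module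
      have hi : ⟪f' y, w - y⟫ = -(1 / L) * ⟪f' y, f' y - c⟫ := by
        rw [hwy, inner_neg_right, real_inner_smul_right]; ring
      have hcwy : ⟪c, w - y⟫ = -(1 / L) * ⟪c, f' y - c⟫ := by
        rw [hwy, inner_neg_right, real_inner_smul_right]; ring
      have hnw : ‖w - y‖ ^ 2 = (1 / L) ^ 2 * ‖f' y - c‖ ^ 2 := by
        rw [hwy, norm_neg, norm_smul, mul_pow, Real.norm_eq_abs, sq_abs]
      have hsub : ⟪f' y, f' y - c⟫ - ⟪c, f' y - c⟫ = ‖f' y - c‖ ^ 2 := by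
        rw [← inner_sub_left, real_inner_self_eq_norm_sq]
      have hhw : h w = f w - ⟪c, w⟫ := rfl
      have hhy : h y = f y - ⟪c, y⟫ := rfl
      have hcw : ⟪c, w⟫ = ⟪c, y⟫ + ⟪c, w - y⟫ := by
        rw [← inner_add_right]; congr 1; module
      rw [hhw, hhy, hcw]
      rw [hi, hnw] at hd
      rw [hcwy]
      have e1 : 1 / L * ⟪f' y, f' y - c⟫ - 1 / L * ⟪c, f' y - c⟫
          = 1 / L * ‖f' y - c‖ ^ 2 := by rw [← mul_sub, hsub]
      have e2c : L / 2 * (1 / L) ^ 2 = 1 / (2 * L) := by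
        rw [div_pow, one_pow, div_mul_div_comm, div_eq_div_iff (by positivity) (by positivity)]
        ring
      have e2 : L / 2 * ((1 / L) ^ 2 * ‖f' y - c‖ ^ 2) = 1 / (2 * L) * ‖f' y - c‖ ^ 2 := by
        rw [← mul_assoc, e2c]
      have e3 : 1 / L * ‖f' y - c‖ ^ 2
          = 1 / (2 * L) * ‖f' y - c‖ ^ 2 + 1 / (2 * L) * ‖f' y - c‖ ^ 2 := by
        rw [← add_mul]
        congr 1
        rw [← add_div, div_eq_div_iff (by positivity) (by positivity)]
        ring
      rw [e2] at hd
      linarith [hd, e1, e3]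
    have hhx : h x = f x - ⟪c, x⟫ := rfl
    have hhy : h y = f y - ⟪c, y⟫ := rfl
    have : ⟪c, y⟫ - ⟪c, x⟫ = ⟪c, y - x⟫ := by rw [inner_sub_right]
    have := h1.trans h2
    rw [hhx, hhy] at this
    have hir : ⟪c, y - x⟫ = ⟪c, y⟫ - ⟪c, x⟫ := by rw [inner_sub_right]
    rw [hir]
    linarith
  have k1 := key x y
  have k2 := key y x
  have hrev : ‖f' y - f' x‖ = ‖f' x - f' y‖ := norm_sub_rev _ _
  have hi1 : ⟪f' x, y - x⟫ = -⟪f' x, x - y⟫ := by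
    rw [← inner_neg_right]; congr 1; module
  have hi2 : ⟪f' y, x - y⟫ = ⟪f' y, x - y⟫ := rfl
  have hsum : ⟪f' x - f' y, x - y⟫ = ⟪f' x, x - y⟫ - ⟪f' y, x - y⟫ := by
    rw [inner_sub_left]
  rw [hrev] at k1
  have h2L : 1 / (2 * L) + 1 / (2 * L) = 1 / L := by
    rw [← add_div, div_eq_div_iff (by positivity) (by positivity)]
    ring
  have e2 : 1 / (2 * L) * ‖f' x - f' y‖ ^ 2 + 1 / (2 * L) * ‖f' x - f' y‖ ^ 2
      = 1 / L * ‖f' x - f' y‖ ^ 2 := by rw [← add_mul, h2L]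
  rw [hsum]
  rw [hi1] at k1
  linarith [k1, k2, e2]

lemma ereal_exists_real {v : EReal} (h1 : v ≠ ⊥) (h2 : v ≠ ⊤) : ∃ r : ℝ, v = (r : EReal) := by
  induction v with
  | bot => exact absurd rfl h1
  | coe r => exact ⟨r, rfl⟩
  | top => exact absurd rfl h2

lemma prox_key {g : E → EReal} {prox : E → E} {lam : ℝ} (hlam : 0 < lam)
    (hg_conv : ∀ x y : E, ∀ a b : ℝ, 0 ≤ a → 0 ≤ b → a + b = 1 →
      g (a • x + b • y) ≤ (a : EReal) * g x + (b : EReal) * g y)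
    (hprox : ∀ x u : E,
      g (prox x) + ((‖prox x - x‖ ^ 2 / (2 * lam) : ℝ) : EReal) ≤
        g u + ((‖u - x‖ ^ 2 / (2 * lam) : ℝ) : EReal))
    (x : E) {a b : ℝ} {p q : E} (hpx : p = prox x) (ha : g p = (a : EReal)) (hb : g q = (b : EReal))
    {t : ℝ} (ht0 : 0 < t) (ht1 : t ≤ 1) :
    t * (a - b) ≤ (2 * t * ⟪p - x, q - p⟫ + t ^ 2 * ‖q - p‖ ^ 2) / (2 * lam) := by
  have hcomb := hg_conv p q (1 - t) t (by linarith) (le_of_lt ht0) (by ring)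
  have hpt : (1 - t) • p + t • q = p + t • (q - p) := by module
  rw [hpt, ha, hb, ← EReal.coe_mul, ← EReal.coe_mul, ← EReal.coe_add] at hcomb
  have hpr := hprox x (p + t • (q - p))
  rw [← hpx, ha] at hpr
  have hkey := hpr.trans (add_le_add_left hcomb _)
  rw [← EReal.coe_add, ← EReal.coe_add, EReal.coe_le_coe_iff] at hkey
  have hBexp : ‖p + t • (q - p) - x‖ ^ 2
      = ‖p - x‖ ^ 2 + (2 * t * ⟪p - x, q - p⟫ + t ^ 2 * ‖q - p‖ ^ 2) := by
    have h1 : p + t • (q - p) - x = (p - x) + t • (q - p) := by module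
    rw [h1, norm_add_sq_real, real_inner_smul_right, norm_smul, Real.norm_eq_abs,
      mul_pow, sq_abs]
    ring
  rw [hBexp, add_div] at hkey
  linarith

lemma prox_firm {g : E → EReal} {prox : E → E} {lam : ℝ} (hlam : 0 < lam)
    (hg_nebot : ∀ x, g x ≠ ⊥)
    (hg_proper : ∃ x, g x ≠ ⊤)
    (hg_conv : ∀ x y : E, ∀ a b : ℝ, 0 ≤ a → 0 ≤ b → a + b = 1 →
      g (a • x + b • y) ≤ (a : EReal) * g x + (b : EReal) * g y)
    (hprox : ∀ x u : E,
      g (prox x) + ((‖prox x - x‖ ^ 2 / (2 * lam) : ℝ) : EReal) ≤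
        g u + ((‖u - x‖ ^ 2 / (2 * lam) : ℝ) : EReal))
    (x y : E) : ‖prox x - prox y‖ ^ 2 ≤ ⟪x - y, prox x - prox y⟫ := by
  obtain ⟨u₀, hu₀⟩ := hg_proper
  obtain ⟨r₀, hr₀⟩ := ereal_exists_real (hg_nebot u₀) hu₀
  have hfin : ∀ z, g (prox z) ≠ ⊤ := by
    intro z htop
    have hp := hprox z u₀
    rw [htop, hr₀] at hp
    rw [EReal.top_add_coe, ← EReal.coe_add, top_le_iff] at hp
    exact EReal.coe_ne_top _ hp
  set p := prox x with hp
  set q := prox y with hq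
  obtain ⟨a, ha⟩ := ereal_exists_real (hg_nebot p) (hfin x)
  obtain ⟨b, hb⟩ := ereal_exists_real (hg_nebot q) (hfin y)
  have key : ∀ t : ℝ, 0 < t → t ≤ 1 →
      (1 - t) * ‖p - q‖ ^ 2 ≤ ⟪x - y, p - q⟫ := by
    intro t ht0 ht1
    have i1 := prox_key hlam hg_conv hprox x hp ha hb ht0 ht1
    have i2 := prox_key hlam hg_conv hprox y hq hb ha ht0 ht1
    have hsum : 0 ≤ (2 * t * (⟪p - x, q - p⟫ + ⟪q - y, p - q⟫) + 2 * t ^ 2 * ‖q - p‖ ^ 2)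
        / (2 * lam) := by
      have hqp : ‖p - q‖ = ‖q - p‖ := norm_sub_rev _ _
      rw [hqp] at i2
      have := add_le_add i1 i2
      rw [← add_div] at this
      calc (0:ℝ) = t * (a - b) + t * (b - a) := by ring
        _ ≤ _ := this.trans (le_of_eq (by ring))
    have hpos : 0 ≤ 2 * t * (⟪p - x, q - p⟫ + ⟪q - y, p - q⟫) + 2 * t ^ 2 * ‖q - p‖ ^ 2 := by
      have h2 := mul_nonneg hsum (le_of_lt (by linarith : (0:ℝ) < 2 * lam))
      rwa [div_mul_cancel₀ _ (by linarith : (2:ℝ) * lam ≠ 0)] at h2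
    -- identity: ⟪p - x, q - p⟫ + ⟪q - y, p - q⟫ = ⟪x - y, p - q⟫ - ‖p - q‖ ^ 2
    have hid : ⟪p - x, q - p⟫ + ⟪q - y, p - q⟫ = ⟪x - y, p - q⟫ - ‖p - q‖ ^ 2 := by
      have npq : ‖p - q‖ ^ 2 = ⟪p, p⟫ - 2 * ⟪p, q⟫ + ⟪q, q⟫ := by
        rw [← real_inner_self_eq_norm_sq, inner_sub_left, inner_sub_right, inner_sub_right,
          real_inner_comm q p]
        ring
      simp only [inner_sub_left, inner_sub_right]
      rw [npq]
      linarith [real_inner_comm q p]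
    rw [hid] at hpos
    have hqp2 : ‖q - p‖ = ‖p - q‖ := norm_sub_rev _ _
    rw [hqp2] at hpos
    nlinarith [hpos, ht0]
  -- pass to the limit t → 0⁺
  refine le_of_forall_pos_le_add (fun ε hε => ?_)
  by_cases hz : ‖p - q‖ ^ 2 = 0
  · have := key 1 one_pos le_rfl
    rw [hz] at *
    linarith
  · have hNpos : 0 < ‖p - q‖ ^ 2 := lt_of_le_of_ne (by positivity) (Ne.symm hz)
    set t := min 1 (ε / ‖p - q‖ ^ 2) with htd
    have ht0 : 0 < t := lt_min one_pos (div_pos hε hNpos)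
    have ht1 : t ≤ 1 := min_le_left _ _
    have := key t ht0 ht1
    have htb : t * ‖p - q‖ ^ 2 ≤ ε := by
      have : t ≤ ε / ‖p - q‖ ^ 2 := min_le_right _ _
      calc t * ‖p - q‖ ^ 2 ≤ (ε / ‖p - q‖ ^ 2) * ‖p - q‖ ^ 2 :=
            mul_le_mul_of_nonneg_right this (le_of_lt hNpos)
        _ = ε := div_mul_cancel₀ _ (ne_of_gt hNpos)
    nlinarith [this, htb]

lemma real_le_of_sq_le_sq {a b : ℝ} (h : a ^ 2 ≤ b ^ 2) (ha : 0 ≤ a) (hb : 0 ≤ b) : a ≤ b := by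
  nlinarith

/-- the gradient-step-with-double-stepsize map is nonexpansive -/
lemma S_nonexpansive {f : E → ℝ} {f' : E → E} {L : ℝ} (hL : 0 < L)
    (hconv : ConvexOn ℝ Set.univ f)
    (hdiff : ∀ x, HasGradientAt f (f' x) x)
    (hlip : ∀ x y, ‖f' x - f' y‖ ≤ L * ‖x - y‖)
    (x y : E) : ‖(x - (2 / L) • f' x) - (y - (2 / L) • f' y)‖ ≤ ‖x - y‖ := by
  have hbh := baillon_haddad hL hconv hdiff hlip x y
  have hd : (x - (2 / L) • f' x) - (y - (2 / L) • f' y)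
      = (x - y) - (2 / L) • (f' x - f' y) := by module
  have hsq : ‖(x - (2 / L) • f' x) - (y - (2 / L) • f' y)‖ ^ 2 ≤ ‖x - y‖ ^ 2 := by
    rw [hd, norm_sub_sq_real, real_inner_smul_right, norm_smul, Real.norm_eq_abs,
      abs_of_pos (by positivity : (0:ℝ) < 2 / L), mul_pow]
    have hc : (2 / L) ^ 2 * ‖f' x - f' y‖ ^ 2 = (2 / L) * (2 * (1 / L * ‖f' x - f' y‖ ^ 2)) := by
      rw [div_pow]; field_simp
    have hcomm : ⟪x - y, f' x - f' y⟫ = ⟪f' x - f' y, x - y⟫ := real_inner_comm _ _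
    nlinarith [hbh, hc, hcomm, div_pos (by norm_num : (0:ℝ) < 2) hL]
  exact real_le_of_sq_le_sq hsq (norm_nonneg _) (norm_nonneg _)

/-- the reflected prox map is nonexpansive -/
lemma N_nonexpansive {g : E → EReal} {prox : E → E} {lam : ℝ} (hlam : 0 < lam)
    (hg_nebot : ∀ x, g x ≠ ⊥)
    (hg_proper : ∃ x, g x ≠ ⊤)
    (hg_conv : ∀ x y : E, ∀ a b : ℝ, 0 ≤ a → 0 ≤ b → a + b = 1 →
      g (a • x + b • y) ≤ (a : EReal) * g x + (b : EReal) * g y)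
    (hprox : ∀ x u : E,
      g (prox x) + ((‖prox x - x‖ ^ 2 / (2 * lam) : ℝ) : EReal) ≤
        g u + ((‖u - x‖ ^ 2 / (2 * lam) : ℝ) : EReal))
    (z w : E) : ‖((2:ℝ) • prox z - z) - ((2:ℝ) • prox w - w)‖ ≤ ‖z - w‖ := by
  have hfirm := prox_firm hlam hg_nebot hg_proper hg_conv hprox z w
  have hd : ((2:ℝ) • prox z - z) - ((2:ℝ) • prox w - w)
      = (2:ℝ) • (prox z - prox w) - (z - w) := by module
  have hsq : ‖((2:ℝ) • prox z - z) - ((2:ℝ) • prox w - w)‖ ^ 2 ≤ ‖z - w‖ ^ 2 := by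
    rw [hd, norm_sub_sq_real, real_inner_smul_left, norm_smul, Real.norm_eq_abs,
      abs_of_pos (by norm_num : (0:ℝ) < 2), mul_pow]
    have hcomm : ⟪prox z - prox w, z - w⟫ = ⟪z - w, prox z - prox w⟫ := real_inner_comm _ _
    nlinarith [hfirm, hcomm]
  exact real_le_of_sq_le_sq hsq (norm_nonneg _) (norm_nonneg _)

/-- The prox-grad mapping `T_λ = prox_{λg} ∘ (I - λ∇f)` is `(2 + λ L_f)/4`-averaged for
`λ ∈ (0, 2/L_f)`, where `f` is convex and differentiable with `L_f`-Lipschitz gradient and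
`g` is a proper, lower semicontinuous, convex extended-real-valued function. -/
theorem proxgrad_averaged {d : ℕ}
    (f : EuclideanSpace ℝ (Fin d) → ℝ)
    (f' : EuclideanSpace ℝ (Fin d) → EuclideanSpace ℝ (Fin d))
    (g : EuclideanSpace ℝ (Fin d) → EReal)
    (prox : EuclideanSpace ℝ (Fin d) → EuclideanSpace ℝ (Fin d))
    (Lf lam : ℝ) (hLf : 0 < Lf)
    (hfconv : ConvexOn ℝ Set.univ f)
    (hfdiff : ∀ x, HasGradientAt f (f' x) x)
    (hflip : ∀ x y, ‖f' x - f' y‖ ≤ Lf * ‖x - y‖)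
    (hg_nebot : ∀ x, g x ≠ ⊥)
    (hg_proper : ∃ x, g x ≠ ⊤)
    (hg_lsc : LowerSemicontinuous g)
    (hg_conv : ∀ x y : EuclideanSpace ℝ (Fin d), ∀ a b : ℝ, 0 ≤ a → 0 ≤ b → a + b = 1 →
      g (a • x + b • y) ≤ (a : EReal) * g x + (b : EReal) * g y)
    (hlam : lam ∈ Set.Ioo 0 (2 / Lf))
    (hprox : ∀ x u : EuclideanSpace ℝ (Fin d),
      g (prox x) + ((‖prox x - x‖ ^ 2 / (2 * lam) : ℝ) : EReal) ≤
        g u + ((‖u - x‖ ^ 2 / (2 * lam) : ℝ) : EReal)) :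
    ∃ T : EuclideanSpace ℝ (Fin d) → EuclideanSpace ℝ (Fin d),
      (∀ x y, ‖T x - T y‖ ≤ ‖x - y‖) ∧
        ∀ x, prox (x - lam • f' x) = ((2 - lam * Lf) / 4) • x + ((2 + lam * Lf) / 4) • T x := by
  obtain ⟨hlam0, hlam2⟩ := hlam
  have hLfne : Lf ≠ 0 := ne_of_gt hLf
  have hlamLf : lam * Lf < 2 := by
    rw [lt_div_iff₀ hLf] at hlam2; linarith
  have hlamLf0 : 0 < lam * Lf := mul_pos hlam0 hLf
  set α : ℝ := (2 + lam * Lf) / 4 with hα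
  have hαpos : 0 < α := by positivity
  have hαne : α ≠ 0 := ne_of_gt hαpos
  set S := fun z : EuclideanSpace ℝ (Fin d) => z - (2 / Lf) • f' z with hS
  set N := fun z : EuclideanSpace ℝ (Fin d) => (2:ℝ) • prox z - z with hN
  set G := fun z : EuclideanSpace ℝ (Fin d) => z - lam • f' z with hG
  set T := fun z : EuclideanSpace ℝ (Fin d) =>
    α⁻¹ • (prox (G z) - ((2 - lam * Lf) / 4) • z) with hT
  have hSnon : ∀ x y, ‖S x - S y‖ ≤ ‖x - y‖ := by
    intro x y
    simp only [hS]
    exact S_nonexpansive hLf hfconv hfdiff hflip x y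
  have hNnon : ∀ z w, ‖N z - N w‖ ≤ ‖z - w‖ := by
    intro z w
    simp only [hN]
    exact N_nonexpansive hlam0 hg_nebot hg_proper hg_conv hprox z w
  have hGnon : ∀ x y, ‖G x - G y‖ ≤ ‖x - y‖ := by
    intro x y
    have hβ0 : 0 < lam * Lf / 2 := by positivity
    have hβ1 : lam * Lf / 2 < 1 := by linarith
    have hGd : G x - G y = (1 - lam * Lf / 2) • (x - y) + (lam * Lf / 2) • (S x - S y) := by
      simp only [hS, hG]
      match_scalars <;> (try field_simp [hLfne]) <;> (try ring)
    calc ‖G x - G y‖ = ‖(1 - lam * Lf / 2) • (x - y) + (lam * Lf / 2) • (S x - S y)‖ := by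
          rw [hGd]
      _ ≤ ‖(1 - lam * Lf / 2) • (x - y)‖ + ‖(lam * Lf / 2) • (S x - S y)‖ := norm_add_le _ _
      _ = (1 - lam * Lf / 2) * ‖x - y‖ + (lam * Lf / 2) * ‖S x - S y‖ := by
          rw [norm_smul, norm_smul, Real.norm_eq_abs, Real.norm_eq_abs,
            abs_of_pos hβ0, abs_of_pos (by linarith : (0:ℝ) < 1 - lam * Lf / 2)]
      _ ≤ (1 - lam * Lf / 2) * ‖x - y‖ + (lam * Lf / 2) * ‖x - y‖ :=
          add_le_add_right (mul_le_mul_of_nonneg_left (hSnon x y) (le_of_lt hβ0)) _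
      _ = ‖x - y‖ := by ring
  have hproxN : ∀ z, prox z = (2:ℝ)⁻¹ • (z + N z) := by
    intro z; simp only [hN]; module
  have hTS : ∀ z, T z = α⁻¹ • ((lam * Lf / 4) • S z + (2:ℝ)⁻¹ • N (G z)) := by
    intro z
    simp only [hT]
    congr 1
    rw [hproxN (G z)]
    simp only [hS, hG]
    match_scalars <;> (try field_simp [hLfne]) <;> (try ring)
  refine ⟨T, fun x y => ?_, fun x => ?_⟩
  · have h1 : T x - T y
        = α⁻¹ • ((lam * Lf / 4) • (S x - S y) + (2:ℝ)⁻¹ • (N (G x) - N (G y))) := by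
      rw [hTS x, hTS y, ← smul_sub]
      congr 1
      module
    have h2 : ‖(lam * Lf / 4) • (S x - S y) + (2:ℝ)⁻¹ • (N (G x) - N (G y))‖
        ≤ (lam * Lf / 4) * ‖x - y‖ + (2:ℝ)⁻¹ * ‖x - y‖ := by
      calc ‖(lam * Lf / 4) • (S x - S y) + (2:ℝ)⁻¹ • (N (G x) - N (G y))‖
          ≤ ‖(lam * Lf / 4) • (S x - S y)‖ + ‖(2:ℝ)⁻¹ • (N (G x) - N (G y))‖ :=
            norm_add_le _ _
        _ = (lam * Lf / 4) * ‖S x - S y‖ + (2:ℝ)⁻¹ * ‖N (G x) - N (G y)‖ := by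
            rw [norm_smul, norm_smul, Real.norm_eq_abs, Real.norm_eq_abs,
              abs_of_pos (by positivity : (0:ℝ) < lam * Lf / 4),
              abs_of_pos (by norm_num : (0:ℝ) < (2:ℝ)⁻¹)]
        _ ≤ (lam * Lf / 4) * ‖x - y‖ + (2:ℝ)⁻¹ * ‖x - y‖ := by
            have hNG : ‖N (G x) - N (G y)‖ ≤ ‖x - y‖ := (hNnon _ _).trans (hGnon x y)
            exact add_le_add
              (mul_le_mul_of_nonneg_left (hSnon x y) (by positivity))
              (mul_le_mul_of_nonneg_left hNG (by norm_num))
    calc ‖T x - T y‖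
        = α⁻¹ * ‖(lam * Lf / 4) • (S x - S y) + (2:ℝ)⁻¹ • (N (G x) - N (G y))‖ := by
          rw [h1, norm_smul, Real.norm_eq_abs, abs_of_pos (inv_pos.mpr hαpos)]
      _ ≤ α⁻¹ * ((lam * Lf / 4) * ‖x - y‖ + (2:ℝ)⁻¹ * ‖x - y‖) :=
          mul_le_mul_of_nonneg_left h2 (le_of_lt (inv_pos.mpr hαpos))
      _ = α⁻¹ * (α * ‖x - y‖) := by rw [hα]; ring_nf
      _ = ‖x - y‖ := by rw [← mul_assoc, inv_mul_cancel₀ hαne, one_mul]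
  · have hTx : α • T x = prox (G x) - ((2 - lam * Lf) / 4) • x := by
      simp only [hT]
      exact smul_inv_smul₀ hαne _
    have hGx : x - lam • f' x = G x := rfl
    rw [hGx, hTx]
    module
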